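/- arXiv:2211.15522 — 2 statements merged into one kernel-verified Lean document; each statement's English description precedes it below -/
import Mathlib

section
/- Let E be a finite-dimensional real inner product space, let ȳ ∈ E, r > 0, σ > 0, M₂ > 0, and let f : E → ℝ be twice continuously differentiable on the open ball B(ȳ, r). Assume |f(y)| ≤ σ for all y ∈ B(ȳ, r), the operator norm of the second Fréchet derivative of f satisfies ‖f''(y)‖ ≤ M₂ for all y ∈ B(ȳ, r), and 2·√(σ/M₂) < r. Then the gradient of f at ȳ satisfies ‖∇f(ȳ)‖ ≤ 2·√(σ·M₂). -/
open Metric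

/-- Gradient estimate for a twice continuously differentiable function that is
small on a ball and has bounded second derivative: the gradient at the center
satisfies `‖∇f(ybar)‖ ≤ 2√(σ M₂)`. -/
theorem gradient_bound_of_small_on_ball
    {E : Type*} [NormedAddCommGroup E] [InnerProductSpace ℝ E] [FiniteDimensional ℝ E]
    (ybar : E) (r σ M₂ : ℝ) (hr : 0 < r) (hσ : 0 < σ) (hM₂ : 0 < M₂)
    (f : E → ℝ)
    (hf : ContDiffOn ℝ 2 f (ball ybar r))
    (hfσ : ∀ y ∈ ball ybar r, |f y| ≤ σ)
    (hf'' : ∀ y ∈ ball ybar r, ‖iteratedFDerivWithin ℝ 2 f (ball ybar r) y‖ ≤ M₂)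
    (hsmall : 2 * Real.sqrt (σ / M₂) < r) :
    ‖gradient f ybar‖ ≤ 2 * Real.sqrt (σ * M₂) := by
  set t := Real.sqrt (σ / M₂) with ht_def
  have ht : 0 < t := Real.sqrt_pos.mpr (by positivity)
  have htr : t < r := by nlinarith
  have htsq : t * t = σ / M₂ := Real.mul_self_sqrt (by positivity)
  have hMt : M₂ * t * t = σ := by
    rw [mul_assoc, htsq]; field_simp
  have hst : Real.sqrt (σ * M₂) * t = σ := by
    rw [ht_def, ← Real.sqrt_mul (by positivity)]
    rw [show σ * M₂ * (σ / M₂) = σ ^ 2 by field_simp]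
    exact Real.sqrt_sq hσ.le
  have hyb : ybar ∈ ball ybar r := mem_ball_self hr
  -- differentiability facts
  have hdf : ∀ x ∈ ball ybar r, DifferentiableAt ℝ f x := fun x hx =>
    (hf.contDiffAt (isOpen_ball.mem_nhds hx)).differentiableAt two_ne_zero
  have hf1 : ContDiffOn ℝ 1 (fderiv ℝ f) (ball ybar r) :=
    hf.fderiv_of_isOpen isOpen_ball le_rfl
  have hdf' : ∀ x ∈ ball ybar r, DifferentiableAt ℝ (fderiv ℝ f) x := fun x hx =>
    ((hf1.contDiffAt (isOpen_ball.mem_nhds hx)).differentiableAt one_ne_zero)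
  set L := fderiv ℝ f ybar with hL
  -- bound on second derivative
  have hbound2 : ∀ x ∈ ball ybar r, ‖fderiv ℝ (fderiv ℝ f) x‖ ≤ M₂ := by
    intro x hx
    have h2 : ‖iteratedFDeriv ℝ 2 f x‖ ≤ M₂ := by
      rw [← iteratedFDerivWithin_of_isOpen 2 isOpen_ball hx]
      exact hf'' x hx
    refine ContinuousLinearMap.opNorm_le_bound _ hM₂.le (fun u => ?_)
    refine ContinuousLinearMap.opNorm_le_bound _ (by positivity) (fun v => ?_)
    have := (iteratedFDeriv ℝ 2 f x).le_opNorm ![u, v]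
    rw [iteratedFDeriv_two_apply f x ![u, v]] at this
    simp only [Matrix.cons_val_zero, Matrix.cons_val_one, Matrix.head_cons,
      Fin.prod_univ_two] at this
    calc ‖fderiv ℝ (fderiv ℝ f) x u v‖ ≤ ‖iteratedFDeriv ℝ 2 f x‖ * (‖u‖ * ‖v‖) := this
      _ ≤ M₂ * (‖u‖ * ‖v‖) := by
          have : (0:ℝ) ≤ ‖u‖ * ‖v‖ := by positivity
          nlinarith
      _ = M₂ * ‖u‖ * ‖v‖ := by ring
  -- Lipschitz bound on the gradient
  have hLip : ∀ z ∈ ball ybar r, ‖fderiv ℝ f z - L‖ ≤ M₂ * ‖z - ybar‖ := fun z hz =>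
    (convex_ball ybar r).norm_image_sub_le_of_norm_fderiv_le hdf' hbound2 hyb hz
  -- Taylor-type estimate on the closed ball of radius t
  have hsub : closedBall ybar t ⊆ ball ybar r := closedBall_subset_ball htr
  have hTaylor : ∀ y ∈ closedBall ybar t,
      ‖f y - f ybar - L (y - ybar)‖ ≤ M₂ * t * ‖y - ybar‖ := by
    intro y hy
    refine (convex_closedBall ybar t).norm_image_sub_le_of_norm_fderiv_le'
      (fun x hx => hdf x (hsub hx)) (fun x hx => ?_) (mem_closedBall_self ht.le) hy
    calc ‖fderiv ℝ f x - L‖ ≤ M₂ * ‖x - ybar‖ := hLip x (hsub hx)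
      _ ≤ M₂ * t := by
          have := mem_closedBall_iff_norm.mp hx
          nlinarith
  -- key estimate on vectors of norm ≤ t
  have key : ∀ u : E, ‖u‖ ≤ t → |L u| ≤ 2 * σ := by
    intro u hu
    have hp : ybar + u ∈ closedBall ybar t := by
      simpa [mem_closedBall_iff_norm] using hu
    have hm : ybar - u ∈ closedBall ybar t := by
      simpa [mem_closedBall_iff_norm, norm_sub_rev, neg_sub] using hu
    have h₁ := hTaylor _ hp
    have h₂ := hTaylor _ hm
    simp only [add_sub_cancel_left, sub_sub_cancel_left, map_neg, norm_neg] at h₁ h₂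
    have hn₁ : M₂ * t * ‖u‖ ≤ σ := by nlinarith [norm_nonneg u]
    have hn₂ : M₂ * t * ‖-u‖ ≤ σ := by rw [norm_neg]; exact hn₁
    have hfp := hfσ _ (hsub hp)
    have hfm := hfσ _ (hsub hm)
    have e₁ : |f (ybar + u) - f ybar - L u| ≤ σ := le_trans h₁ hn₁
    have e₂ : |f (ybar - u) - f ybar + L u| ≤ σ := by
      have h₂' : ‖f (ybar - u) - f ybar - L (-u)‖ ≤ M₂ * t * ‖-u‖ := by
        simpa using hTaylor _ hm
      rw [map_neg, Real.norm_eq_abs] at h₂'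
      calc |f (ybar - u) - f ybar + L u| = |f (ybar - u) - f ybar - -L u| := by ring_nf
        _ ≤ M₂ * t * ‖-u‖ := h₂'
        _ ≤ σ := hn₂
    have : |2 * L u| ≤ 4 * σ := by
      have h2Lu : 2 * L u = (f (ybar + u) - f (ybar - u))
          - (f (ybar + u) - f ybar - L u) + (f (ybar - u) - f ybar + L u) := by ring
      rw [h2Lu]
      calc |_| ≤ |f (ybar + u) - f (ybar - u)| + |f (ybar + u) - f ybar - L u|
            + |f (ybar - u) - f ybar + L u| := by
            exact (abs_add_le _ _).trans (by gcongr; exact abs_sub _ _)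
        _ ≤ (|f (ybar + u)| + |f (ybar - u)|) + σ + σ := by
            gcongr; exact abs_sub _ _
        _ ≤ 4 * σ := by nlinarith
    rw [abs_mul] at this
    simp only [abs_two] at this
    linarith
  -- conclude via operator norm
  have hLnorm : ‖L‖ ≤ 2 * Real.sqrt (σ * M₂) := by
    refine ContinuousLinearMap.opNorm_le_bound _ (by positivity) (fun x => ?_)
    rcases eq_or_ne x 0 with rfl | hx
    · simp
    · have hxn : 0 < ‖x‖ := norm_pos_iff.mpr hx
      have hk := key ((t / ‖x‖) • x) (by
        rw [norm_smul, Real.norm_eq_abs, abs_of_pos (by positivity)]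
        field_simp; exact le_rfl)
      rw [map_smul] at hk
      have : |t / ‖x‖| * |L x| ≤ 2 * σ := by
        rw [← abs_mul]; simpa [smul_eq_mul] using hk
      rw [abs_of_pos (by positivity : (0:ℝ) < t / ‖x‖)] at this
      have hLx : |L x| ≤ 2 * σ * ‖x‖ / t := by
        rw [div_mul_eq_mul_div, div_le_iff₀ hxn] at this
        rw [le_div_iff₀ ht]
        nlinarith [abs_nonneg (L x)]
      calc ‖L x‖ = |L x| := rfl
        _ ≤ 2 * σ * ‖x‖ / t := hLx
        _ = 2 * Real.sqrt (σ * M₂) * ‖x‖ := by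
            rw [div_eq_iff ht.ne']
            linear_combination (-2 : ℝ) * ‖x‖ * hst
  have hgrad : ‖gradient f ybar‖ = ‖L‖ := by
    rw [gradient, hL]
    exact LinearIsometryEquiv.norm_map _ _
  rw [hgrad]; exact hLnorm
end

section
/- Let E and F be finite-dimensional real inner product spaces with F = EuclideanSpace ℝ (Fin m), let ȳ ∈ E and r > 0. Let A : E → (F →L[ℝ] F) be differentiable at ȳ with A(ȳ) an invertible continuous linear map, and let b : E → F be twice continuously differentiable on the open ball B(ȳ, r) with component functions b_i := ⟨b(·), e_i⟩ with respect to the standard orthonormal basis (e_i) of F. Set σ := sup over y ∈ B(ȳ, r) of ‖b(y)‖ and suppose σ > 0 and M₂ > 0 are such that ‖b_i''(y)‖ ≤ M₂ for all y ∈ B(ȳ, r) and all i, and 4σ < M₂·r². Define P̄ := −(A(ȳ))⁻¹(b(ȳ)) and G(y) := A(y)(P̄) + b(y). Then G is differentiable at ȳ and ‖DG(ȳ)‖ ≤ ‖DA(ȳ)‖·‖(A(ȳ))⁻¹‖·σ + 2·√m·√(σ·M₂), where DG(ȳ) and DA(ȳ) are the Fréchet derivatives at ȳ and all norms are operator norms.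 -/
open Metric

lemma grad_bound_aux {E : Type*} [NormedAddCommGroup E] [NormedSpace ℝ E]
    (ybar : E) (r σ M₂ : ℝ) (hr : 0 < r) (hσpos : 0 < σ) (hM₂ : 0 < M₂)
    (hsmall : 4 * σ < M₂ * r ^ 2)
    (f : E → ℝ) (hf : ContDiffOn ℝ 2 f (ball ybar r))
    (hfσ : ∀ y ∈ ball ybar r, |f y| ≤ σ)
    (hf'' : ∀ y ∈ ball ybar r, ‖iteratedFDerivWithin ℝ 2 f (ball ybar r) y‖ ≤ M₂) :
    ∀ h : E, |fderiv ℝ f ybar h| ≤ 2 * Real.sqrt (σ * M₂) * ‖h‖ := by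
  have hsopen : IsOpen (ball ybar r) := isOpen_ball
  have hud : UniqueDiffOn ℝ (ball ybar r) := hsopen.uniqueDiffOn
  have hconv : Convex ℝ (ball ybar r) := convex_ball _ _
  have hyb : ybar ∈ ball ybar r := mem_ball_self hr
  -- the derivative of f (within = total on the open ball)
  have hfd : DifferentiableOn ℝ f (ball ybar r) := hf.differentiableOn (by norm_num)
  have hfda : ∀ y ∈ ball ybar r, DifferentiableAt ℝ f y := fun y hy =>
    (hfd y hy).differentiableAt (hsopen.mem_nhds hy)
  -- the second derivative bound gives Lipschitz continuity of fderiv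
  have hDf : ContDiffOn ℝ 1 (fderivWithin ℝ f (ball ybar r)) (ball ybar r) :=
    hf.fderivWithin hud (by norm_num)
  have hDfd : DifferentiableOn ℝ (fderivWithin ℝ f (ball ybar r)) (ball ybar r) :=
    hDf.differentiableOn one_ne_zero
  have hD2 : ∀ y ∈ ball ybar r,
      ‖fderivWithin ℝ (fderivWithin ℝ f (ball ybar r)) (ball ybar r) y‖ ≤ M₂ := by
    intro y hy
    refine ContinuousLinearMap.opNorm_le_bound _ hM₂.le (fun u => ?_)
    refine ContinuousLinearMap.opNorm_le_bound _ (by positivity) (fun v => ?_)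
    have := iteratedFDerivWithin_two_apply f hud hy ![u, v]
    simp only [Matrix.cons_val_zero, Matrix.cons_val_one, Matrix.head_cons] at this
    rw [← this]
    calc ‖iteratedFDerivWithin ℝ 2 f (ball ybar r) y ![u, v]‖
        ≤ ‖iteratedFDerivWithin ℝ 2 f (ball ybar r) y‖ * ∏ i, ‖(![u, v]) i‖ :=
          (iteratedFDerivWithin ℝ 2 f (ball ybar r) y).le_opNorm _
      _ ≤ M₂ * (‖u‖ * ‖v‖) := by
          rw [Fin.prod_univ_two]
          simp only [Matrix.cons_val_zero, Matrix.cons_val_one, Matrix.head_cons]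
          gcongr
          exact hf'' y hy
      _ = M₂ * ‖u‖ * ‖v‖ := by ring
  have hlip : ∀ y ∈ ball ybar r, ∀ z ∈ ball ybar r,
      ‖fderivWithin ℝ f (ball ybar r) y - fderivWithin ℝ f (ball ybar r) z‖ ≤ M₂ * ‖y - z‖ :=
    fun y hy z hz => hconv.norm_image_sub_le_of_norm_fderivWithin_le hDfd hD2 hz hy
  -- reduce to unit vectors
  have key : ∀ e : E, ‖e‖ = 1 → |fderiv ℝ f ybar e| ≤ 2 * Real.sqrt (σ * M₂) := by
    intro e he
    set ρ : ℝ := Real.sqrt σ / Real.sqrt M₂ with hρdef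
    have hρpos : 0 < ρ := div_pos (Real.sqrt_pos.2 hσpos) (Real.sqrt_pos.2 hM₂)
    have hρsq : ρ ^ 2 = σ / M₂ := by
      rw [hρdef, div_pow, Real.sq_sqrt hσpos.le, Real.sq_sqrt hM₂.le]
    have hMρ : M₂ * ρ ^ 2 = σ := by
      rw [hρsq]; field_simp
    have hρr : ρ < r := by
      by_contra hcon
      push_neg at hcon
      have h2 : r ^ 2 ≤ ρ ^ 2 := pow_le_pow_left₀ hr.le hcon 2
      nlinarith
    have hmem : ∀ t : ℝ, |t| ≤ ρ → ybar + t • e ∈ ball ybar r := by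
      intro t ht
      simp only [mem_ball, dist_eq_norm]
      rw [add_sub_cancel_left, norm_smul, he, mul_one, Real.norm_eq_abs]
      exact ht.trans_lt hρr
    -- φ and its derivative ψ along the line
    set ψ : ℝ → ℝ := fun t => fderiv ℝ f (ybar + t • e) e with hψdef
    have hφd : ∀ t : ℝ, |t| ≤ ρ → HasDerivAt (fun s : ℝ => f (ybar + s • e)) (ψ t) t := by
      intro t ht
      have h1 : HasDerivAt (fun s : ℝ => ybar + s • e) e t := by
        simpa using ((hasDerivAt_id t).smul_const e).const_add ybar
      exact ((hfda _ (hmem t ht)).hasFDerivAt.comp_hasDerivAt t h1)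
    -- ψ is close to ψ 0
    have hψlip : ∀ t : ℝ, |t| ≤ ρ → |ψ t - ψ 0| ≤ M₂ * ρ := by
      intro t ht
      have h0 : (ybar + (0:ℝ) • e) = ybar := by simp
      have e1 : ψ t - ψ 0 = (fderivWithin ℝ f (ball ybar r) (ybar + t • e)
          - fderivWithin ℝ f (ball ybar r) ybar) e := by
        rw [hψdef]
        simp only [h0, ContinuousLinearMap.sub_apply,
          fderivWithin_of_isOpen hsopen (hmem t ht), fderivWithin_of_isOpen hsopen hyb]
      rw [e1]
      calc ‖(fderivWithin ℝ f (ball ybar r) (ybar + t • e)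
            - fderivWithin ℝ f (ball ybar r) ybar) e‖
          ≤ ‖fderivWithin ℝ f (ball ybar r) (ybar + t • e)
            - fderivWithin ℝ f (ball ybar r) ybar‖ * ‖e‖ :=
            ContinuousLinearMap.le_opNorm _ _
        _ ≤ (M₂ * ‖(ybar + t • e) - ybar‖) * 1 := by
            rw [he]
            gcongr
            exact hlip _ (hmem t ht) _ hyb
        _ ≤ M₂ * ρ := by
            rw [mul_one, add_sub_cancel_left, norm_smul, he, mul_one, Real.norm_eq_abs]
            gcongr
    -- mean value estimate for u t = φ t - t * ψ 0 on [-ρ, ρ]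
    have hu : ∀ t ∈ Set.Icc (-ρ) ρ, HasDerivWithinAt
        (fun s : ℝ => f (ybar + s • e) - s * ψ 0) (ψ t - ψ 0) (Set.Icc (-ρ) ρ) t := by
      intro t ht
      have habs : |t| ≤ ρ := abs_le.2 ⟨ht.1, ht.2⟩
      have := ((hφd t habs).sub ((hasDerivAt_id t).mul_const (ψ 0))).hasDerivWithinAt
        (s := Set.Icc (-ρ) ρ)
      simpa [Pi.sub_def] using this
    have humv := (convex_Icc (-ρ) ρ).norm_image_sub_le_of_norm_hasDerivWithin_le hu
      (fun t ht => hψlip t (abs_le.2 ⟨ht.1, ht.2⟩))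
      (Set.mem_Icc.2 ⟨le_refl _, (neg_le_self hρpos.le).trans le_rfl⟩ :
        (-ρ) ∈ Set.Icc (-ρ) ρ)
      (Set.mem_Icc.2 ⟨(neg_le_self hρpos.le), le_refl _⟩)
    -- unpack
    have hρρ : ‖ρ - (-ρ)‖ = 2 * ρ := by
      rw [Real.norm_eq_abs, sub_neg_eq_add, abs_of_pos (by linarith)]
      ring
    rw [hρρ] at humv
    have hmemρ : ybar + ρ • e ∈ ball ybar r := hmem ρ (by rw [abs_of_pos hρpos])
    have hmemρ' : ybar + (-ρ) • e ∈ ball ybar r := hmem (-ρ) (by rw [abs_neg, abs_of_pos hρpos])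
    have hb1 : |f (ybar + ρ • e)| ≤ σ := hfσ _ hmemρ
    have hb2 : |f (ybar + (-ρ) • e)| ≤ σ := hfσ _ hmemρ'
    have hψ0 : ψ 0 = fderiv ℝ f ybar e := by rw [hψdef]; simp
    -- from humv : |φ(ρ) - ρ ψ0 - (φ(-ρ) + ρ ψ0)| ≤ M₂ρ·2ρ
    have habs : |2 * ρ * ψ 0| ≤ 2 * σ + M₂ * ρ * (2 * ρ) := by
      have h1 : |(f (ybar + ρ • e) - ρ * ψ 0) - (f (ybar + (-ρ) • e) - (-ρ) * ψ 0)|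
          ≤ M₂ * ρ * (2 * ρ) := humv
      have h2 : 2 * ρ * ψ 0 = (f (ybar + ρ • e) - f (ybar + (-ρ) • e))
          - ((f (ybar + ρ • e) - ρ * ψ 0) - (f (ybar + (-ρ) • e) - (-ρ) * ψ 0)) := by ring
      calc |2 * ρ * ψ 0| ≤ |f (ybar + ρ • e) - f (ybar + (-ρ) • e)|
            + |(f (ybar + ρ • e) - ρ * ψ 0) - (f (ybar + (-ρ) • e) - (-ρ) * ψ 0)| := by
            rw [h2]; exact abs_sub _ _
        _ ≤ 2 * σ + M₂ * ρ * (2 * ρ) := by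
            refine add_le_add ?_ h1
            calc |f (ybar + ρ • e) - f (ybar + (-ρ) • e)|
                ≤ |f (ybar + ρ • e)| + |f (ybar + (-ρ) • e)| := abs_sub _ _
              _ ≤ 2 * σ := by linarith
    have h2ρ : (0:ℝ) < 2 * ρ := by linarith
    have hψ0bound : |ψ 0| ≤ σ / ρ + M₂ * ρ := by
      rw [abs_mul, abs_of_pos h2ρ] at habs
      have heq : 2 * ρ * (σ / ρ + M₂ * ρ) = 2 * σ + M₂ * ρ * (2 * ρ) := by
        field_simp
      exact le_of_mul_le_mul_left (by rw [heq]; exact habs) h2ρ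
    have hcomp : σ / ρ + M₂ * ρ = 2 * Real.sqrt (σ * M₂) := by
      have hσs : Real.sqrt σ * Real.sqrt σ = σ := Real.mul_self_sqrt hσpos.le
      have hMs : Real.sqrt M₂ * Real.sqrt M₂ = M₂ := Real.mul_self_sqrt hM₂.le
      have hσ0 : Real.sqrt σ ≠ 0 := (Real.sqrt_pos.2 hσpos).ne'
      have hM0 : Real.sqrt M₂ ≠ 0 := (Real.sqrt_pos.2 hM₂).ne'
      rw [Real.sqrt_mul hσpos.le, hρdef]
      field_simp
      nlinarith [hσs, hMs]
    calc |fderiv ℝ f ybar e| = |ψ 0| := by rw [hψ0]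
      _ ≤ σ / ρ + M₂ * ρ := hψ0bound
      _ = 2 * Real.sqrt (σ * M₂) := hcomp
  -- scaling
  intro h
  rcases eq_or_ne h 0 with rfl | hh
  · simp
  · have hn : 0 < ‖h‖ := norm_pos_iff.2 hh
    have he : ‖(‖h‖⁻¹ • h)‖ = 1 := by
      rw [norm_smul, norm_inv, norm_norm, inv_mul_cancel₀ hn.ne']
    have := key (‖h‖⁻¹ • h) he
    rw [map_smul] at this
    have h2 : |fderiv ℝ f ybar h| = ‖h‖ * |(‖h‖⁻¹ : ℝ) • (fderiv ℝ f ybar h)| := by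
      rw [smul_eq_mul, abs_mul, abs_inv, abs_norm]
      field_simp
    rw [h2]
    calc ‖h‖ * |(‖h‖⁻¹ : ℝ) • (fderiv ℝ f ybar h)| ≤ ‖h‖ * (2 * Real.sqrt (σ * M₂)) := by
          gcongr
      _ = 2 * Real.sqrt (σ * M₂) * ‖h‖ := by ring

/-- Quantitative form of Lemma 2: at the fixed point `Pbar = -A(ybar)⁻¹ b(ybar)`,
the Jacobian of the covariance-propagation constraint `G(y) = A(y) Pbar + b(y)`
is bounded by `‖DA(ybar)‖·‖A(ybar)⁻¹‖·σ + 2√m·√(σ·M₂)`. -/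
theorem jacobian_bound_covariance_constraint
    {E : Type*} [NormedAddCommGroup E] [InnerProductSpace ℝ E] [FiniteDimensional ℝ E]
    {m : ℕ} (ybar : E) (r σ M₂ : ℝ) (hr : 0 < r) (hσpos : 0 < σ) (hM₂ : 0 < M₂)
    (A : E → (EuclideanSpace ℝ (Fin m) →L[ℝ] EuclideanSpace ℝ (Fin m)))
    (hA : DifferentiableAt ℝ A ybar)
    (Ainv : EuclideanSpace ℝ (Fin m) →L[ℝ] EuclideanSpace ℝ (Fin m))
    (hAinv₁ : (A ybar).comp Ainv = ContinuousLinearMap.id ℝ (EuclideanSpace ℝ (Fin m)))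
    (hAinv₂ : Ainv.comp (A ybar) = ContinuousLinearMap.id ℝ (EuclideanSpace ℝ (Fin m)))
    (b : E → EuclideanSpace ℝ (Fin m))
    (hb : ContDiffOn ℝ 2 b (ball ybar r))
    (hσ : σ = sSup ((fun y => ‖b y‖) '' ball ybar r))
    (hb'' : ∀ y ∈ ball ybar r, ∀ i : Fin m,
      ‖iteratedFDerivWithin ℝ 2 (fun y' => inner ℝ (b y') (EuclideanSpace.single i (1 : ℝ)) : E → ℝ)
        (ball ybar r) y‖ ≤ M₂)
    (hsmall : 4 * σ < M₂ * r ^ 2) :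
    DifferentiableAt ℝ (fun y => A y (-(Ainv (b ybar))) + b y) ybar ∧
      ‖fderiv ℝ (fun y => A y (-(Ainv (b ybar))) + b y) ybar‖ ≤
        ‖fderiv ℝ A ybar‖ * ‖Ainv‖ * σ + 2 * Real.sqrt m * Real.sqrt (σ * M₂) := by
  have hyb : ybar ∈ ball ybar r := mem_ball_self hr
  have hsopen : IsOpen (ball ybar r) := isOpen_ball
  -- σ is an upper bound for ‖b y‖ on the ball
  have hσle : ∀ y ∈ ball ybar r, ‖b y‖ ≤ σ := by
    intro y hy
    by_cases hbdd : BddAbove ((fun y => ‖b y‖) '' ball ybar r)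
    · rw [hσ]
      exact le_csSup hbdd ⟨y, hy, rfl⟩
    · exfalso
      rw [hσ, Real.sSup_of_not_bddAbove hbdd] at hσpos
      exact lt_irrefl 0 hσpos
  -- differentiability of b at ybar
  have hbdiff : DifferentiableAt ℝ b ybar :=
    ((hb.differentiableOn (by norm_num)) ybar hyb).differentiableAt (hsopen.mem_nhds hyb)
  -- component bound on the derivative of b
  have hcomp : ∀ i : Fin m, ∀ h : E,
      |fderiv ℝ b ybar h i| ≤ 2 * Real.sqrt (σ * M₂) * ‖h‖ := by
    intro i h
    set f : E → ℝ := fun y' => inner ℝ (b y') (EuclideanSpace.single i (1 : ℝ)) with hfdef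
    have hfC : ContDiffOn ℝ 2 f (ball ybar r) := hb.inner ℝ contDiffOn_const
    have hfσ : ∀ y ∈ ball ybar r, |f y| ≤ σ := by
      intro y hy
      calc |f y| ≤ ‖b y‖ * ‖EuclideanSpace.single i (1:ℝ)‖ := abs_real_inner_le_norm _ _
        _ = ‖b y‖ := by rw [EuclideanSpace.norm_single]; simp
        _ ≤ σ := hσle y hy
    have hkey := grad_bound_aux ybar r σ M₂ hr hσpos hM₂ hsmall f hfC hfσ
      (fun y hy => by rw [hfdef]; exact hb'' y hy i) h
    -- identify fderiv f with the i-th component of fderiv b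
    have hfeq : f = fun y => (EuclideanSpace.proj (𝕜 := ℝ) i) (b y) := by
      funext y
      rw [hfdef]
      show (inner ℝ (b y) (EuclideanSpace.single i (1:ℝ)) : ℝ) = _
      rw [real_inner_comm]
      simp [EuclideanSpace.inner_single_left]
    have hfder : fderiv ℝ f ybar =
        (EuclideanSpace.proj (𝕜 := ℝ) i).comp (fderiv ℝ b ybar) := by
      rw [hfeq]
      rw [show (fun y => (EuclideanSpace.proj (𝕜 := ℝ) i) (b y)) =
        (EuclideanSpace.proj (𝕜 := ℝ) i) ∘ b from rfl]
      rw [fderiv_comp ybar (EuclideanSpace.proj (𝕜 := ℝ) i).differentiableAt hbdiff]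
      rw [ContinuousLinearMap.fderiv]
    rw [hfder] at hkey
    simpa using hkey
  -- norm bound of the derivative of b
  have hDb : ∀ h : E, ‖fderiv ℝ b ybar h‖ ≤ 2 * Real.sqrt m * Real.sqrt (σ * M₂) * ‖h‖ := by
    intro h
    have h1 : ‖fderiv ℝ b ybar h‖ =
        Real.sqrt (∑ i : Fin m, ‖fderiv ℝ b ybar h i‖ ^ 2) :=
      EuclideanSpace.norm_eq _
    rw [h1]
    have h2 : ∑ i : Fin m, ‖fderiv ℝ b ybar h i‖ ^ 2
        ≤ (m : ℝ) * (2 * Real.sqrt (σ * M₂) * ‖h‖) ^ 2 := by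
      calc ∑ i : Fin m, ‖fderiv ℝ b ybar h i‖ ^ 2
          ≤ ∑ _i : Fin m, (2 * Real.sqrt (σ * M₂) * ‖h‖) ^ 2 := by
            refine Finset.sum_le_sum (fun i _ => ?_)
            have := hcomp i h
            rw [Real.norm_eq_abs]
            exact pow_le_pow_left₀ (abs_nonneg _) this 2
        _ = (m : ℝ) * (2 * Real.sqrt (σ * M₂) * ‖h‖) ^ 2 := by
            rw [Finset.sum_const, Finset.card_univ, Fintype.card_fin]
            simp [nsmul_eq_mul]
    calc Real.sqrt (∑ i : Fin m, ‖fderiv ℝ b ybar h i‖ ^ 2)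
        ≤ Real.sqrt ((m : ℝ) * (2 * Real.sqrt (σ * M₂) * ‖h‖) ^ 2) := Real.sqrt_le_sqrt h2
      _ = Real.sqrt m * (2 * Real.sqrt (σ * M₂) * ‖h‖) := by
          rw [Real.sqrt_mul (Nat.cast_nonneg m), Real.sqrt_sq (by positivity)]
      _ = 2 * Real.sqrt m * Real.sqrt (σ * M₂) * ‖h‖ := by ring
  -- the A-part
  set Pb : EuclideanSpace ℝ (Fin m) := -(Ainv (b ybar)) with hPbdef
  have hPb : ‖Pb‖ ≤ ‖Ainv‖ * σ := by
    rw [hPbdef, norm_neg]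
    calc ‖Ainv (b ybar)‖ ≤ ‖Ainv‖ * ‖b ybar‖ := Ainv.le_opNorm _
      _ ≤ ‖Ainv‖ * σ := by gcongr; exact hσle ybar hyb
  set Λ : (EuclideanSpace ℝ (Fin m) →L[ℝ] EuclideanSpace ℝ (Fin m)) →L[ℝ] EuclideanSpace ℝ (Fin m) := ContinuousLinearMap.apply ℝ (EuclideanSpace ℝ (Fin m)) Pb with hΛdef
  have hg1diff : DifferentiableAt ℝ (fun y => A y Pb) ybar := by
    have : (fun y => A y Pb) = Λ ∘ A := rfl
    rw [this]
    exact Λ.differentiableAt.comp ybar hA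
  have hg1der : fderiv ℝ (fun y => A y Pb) ybar = Λ.comp (fderiv ℝ A ybar) := by
    have : (fun y => A y Pb) = Λ ∘ A := rfl
    rw [this, fderiv_comp ybar Λ.differentiableAt hA, ContinuousLinearMap.fderiv]
  -- combine
  have hdiff : DifferentiableAt ℝ (fun y => A y Pb + b y) ybar := hg1diff.add hbdiff
  refine ⟨hdiff, ?_⟩
  rw [fderiv_fun_add hg1diff hbdiff]
  refine ContinuousLinearMap.opNorm_le_bound _ (by positivity) (fun h => ?_)
  calc ‖(fderiv ℝ (fun y => A y Pb) ybar + fderiv ℝ b ybar) h‖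
      ≤ ‖fderiv ℝ (fun y => A y Pb) ybar h‖ + ‖fderiv ℝ b ybar h‖ := by
        rw [ContinuousLinearMap.add_apply]
        exact norm_add_le _ _
    _ ≤ ‖fderiv ℝ A ybar‖ * ‖Ainv‖ * σ * ‖h‖
        + 2 * Real.sqrt m * Real.sqrt (σ * M₂) * ‖h‖ := by
        refine add_le_add ?_ (hDb h)
        rw [hg1der]
        calc ‖Λ.comp (fderiv ℝ A ybar) h‖ = ‖(fderiv ℝ A ybar h) Pb‖ := by
              simp [hΛdef]
          _ ≤ ‖fderiv ℝ A ybar h‖ * ‖Pb‖ := (fderiv ℝ A ybar h).le_opNorm _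
          _ ≤ (‖fderiv ℝ A ybar‖ * ‖h‖) * (‖Ainv‖ * σ) := by
              refine mul_le_mul ((fderiv ℝ A ybar).le_opNorm h) hPb (norm_nonneg _) (by positivity)
          _ = ‖fderiv ℝ A ybar‖ * ‖Ainv‖ * σ * ‖h‖ := by ring
    _ = (‖fderiv ℝ A ybar‖ * ‖Ainv‖ * σ + 2 * Real.sqrt m * Real.sqrt (σ * M₂)) * ‖h‖ := by ring
end
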